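/- Let s ∈ (0,1], 1 < p < ∞, and suppose f : ℝ^N → ℝ satisfies |f(x) − f(y)| ≤ |x−y|^s (exp(g(x) + g(y)) − 1) for all x, y, where g ≥ 0 and g ∈ L^p(ℝ^N). Then there is a constant C depending only on N and p with ‖ log(1 + |f(x)−f(y)|/|x−y|^s) · |x−y|^{−N/p} ‖_{L(p,∞)(ℝ^N × ℝ^N)} ≤ C ‖g‖_{L^p(ℝ^N)}. -/

import Mathlib

open MeasureTheory Filter Set
open scoped ENNReal

noncomputable section

private lemma logA {N : ℕ} {s : ℝ} (hs : s ∈ Set.Ioc (0:ℝ) 1)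
    {f g : EuclideanSpace ℝ (Fin N) → ℝ} (hg0 : ∀ x, 0 ≤ g x)
    (hfg : ∀ x y, |f x - f y| ≤ dist x y ^ s * (Real.exp (g x + g y) - 1))
    (x y : EuclideanSpace ℝ (Fin N)) :
    Real.log (1 + |f x - f y| / dist x y ^ s) ≤ g x + g y := by
  have hgxy : 0 ≤ g x + g y := add_nonneg (hg0 x) (hg0 y)
  by_cases h : dist x y = 0
  · have hxy : x = y := by rwa [dist_eq_zero] at h
    subst hxy
    simpa [sub_self, Real.zero_rpow hs.1.ne'] using hgxy
  · have hd : 0 < dist x y := lt_of_le_of_ne dist_nonneg (Ne.symm h)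
    have hds : 0 < dist x y ^ s := Real.rpow_pos_of_pos hd s
    have h1 : |f x - f y| / dist x y ^ s ≤ Real.exp (g x + g y) - 1 :=
      (div_le_iff₀ hds).mpr (by rw [mul_comm]; exact hfg x y)
    have harg : 0 < 1 + |f x - f y| / dist x y ^ s := by positivity
    rw [Real.log_le_iff_le_exp harg]
    linarith

private lemma volB {N : ℕ} (hN : 0 < N) {p t a : ℝ} (hp : 0 < p) (ht : 0 < t) (ha : 0 ≤ a)
    (x : EuclideanSpace ℝ (Fin N)) :
    volume {y : EuclideanSpace ℝ (Fin N) | t < a * dist x y ^ (-((N:ℝ)/p))} ≤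
      ENNReal.ofReal ((a / t) ^ p) * volume (Metric.ball (0 : EuclideanSpace ℝ (Fin N)) 1) := by
  set c : ℝ := (N:ℝ)/p with hcdef
  have hc : 0 < c := div_pos (by exact_mod_cast hN) hp
  set r : ℝ := (a / t) ^ (p / (N:ℝ)) with hrdef
  have hat : 0 ≤ a / t := div_nonneg ha ht.le
  have hr : 0 ≤ r := Real.rpow_nonneg hat _
  have hsub : {y : EuclideanSpace ℝ (Fin N) | t < a * dist x y ^ (-c)} ⊆ Metric.ball x r := by
    intro y hy
    simp only [Set.mem_setOf_eq] at hy
    have hd0 : (0:ℝ) ≤ dist x y := dist_nonneg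
    have hdpos : 0 < dist x y := by
      rcases hd0.lt_or_eq with h | h
      · exact h
      · exfalso
        rw [← h, Real.zero_rpow (neg_ne_zero.mpr hc.ne'), mul_zero] at hy
        linarith
    have hcp : 0 < dist x y ^ c := Real.rpow_pos_of_pos hdpos c
    have hdc : dist x y ^ c < a / t := by
      rw [Real.rpow_neg hd0, ← div_eq_mul_inv] at hy
      have h2 : t * dist x y ^ c < a := by
        have := (lt_div_iff₀ hcp).mp hy
        linarith
      exact (lt_div_iff₀ ht).mpr (by linarith)
    have hlt : dist x y < r := by
      have h2 : dist x y = (dist x y ^ c) ^ (p / (N:ℝ)) := by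
        rw [← Real.rpow_mul hd0]
        have : c * (p / (N:ℝ)) = 1 := by
          rw [hcdef, div_mul_div_comm, mul_comm (N:ℝ) p, div_self]
          exact (mul_pos hp (by exact_mod_cast hN)).ne'
        rw [this, Real.rpow_one]
      rw [h2, hrdef]
      exact Real.rpow_lt_rpow hcp.le hdc (div_pos hp (by exact_mod_cast hN))
    exact Metric.mem_ball'.mpr hlt
  haveI : Nontrivial (EuclideanSpace ℝ (Fin N)) :=
    Module.nontrivial_of_finrank_pos (R := ℝ) (by simpa [finrank_euclideanSpace_fin] using hN)
  calc volume {y : EuclideanSpace ℝ (Fin N) | t < a * dist x y ^ (-c)}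
      ≤ volume (Metric.ball x r) := measure_mono hsub
    _ = ENNReal.ofReal (r ^ N) * volume (Metric.ball (0 : EuclideanSpace ℝ (Fin N)) 1) := by
        rw [Measure.addHaar_ball volume x hr]
        simp [finrank_euclideanSpace_fin]
    _ = ENNReal.ofReal ((a / t) ^ p) * volume (Metric.ball (0 : EuclideanSpace ℝ (Fin N)) 1) := by
        congr 1
        rw [hrdef, ← Real.rpow_natCast ((a/t) ^ (p/(N:ℝ))) N, ← Real.rpow_mul hat,
          div_mul_cancel₀]
        exact_mod_cast hN.ne'

/-- Logarithmic Brezis–Van Schaftingen–Yung inequality from Crippa–De Lellis type estimates: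
if `|f(x) − f(y)| ≤ |x−y|^s (exp(g(x)+g(y)) − 1)` with `0 ≤ g ∈ L^p`, then
`‖ log(1 + |f(x)−f(y)|/|x−y|^s) |x−y|^{−N/p} ‖_{L(p,∞)(ℝ^N×ℝ^N)} ≤ C ‖g‖_{L^p}`. -/
theorem log_BSY_from_CrippaDeLellis
    (N : ℕ) (p : ℝ) (hp : 1 < p) :
    ∃ C > (0 : ℝ), ∀ s ∈ Set.Ioc (0 : ℝ) 1, ∀ f g : EuclideanSpace ℝ (Fin N) → ℝ,
      (∀ x, 0 ≤ g x) → MemLp g (ENNReal.ofReal p) volume →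
      (∀ x y, |f x - f y| ≤ dist x y ^ s * (Real.exp (g x + g y) - 1)) →
      (⨆ (l : ℝ) (_ : 0 < l), ENNReal.ofReal l *
          ((volume.prod volume)
            {q : EuclideanSpace ℝ (Fin N) × EuclideanSpace ℝ (Fin N) |
              l < Real.log (1 + |f q.1 - f q.2| / dist q.1 q.2 ^ s) *
                    dist q.1 q.2 ^ (-((N : ℝ) / p))}) ^ (1 / p))
        ≤ ENNReal.ofReal C * (∫⁻ x, ENNReal.ofReal (g x ^ p)) ^ (1 / p) := by
  have hp0 : 0 < p := lt_trans one_pos hp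
  set B : ℝ≥0∞ := volume (Metric.ball (0 : EuclideanSpace ℝ (Fin N)) 1) with hBdef
  have hBlt : B < ⊤ := measure_ball_lt_top
  have hBpos : 0 < B := Metric.measure_ball_pos volume _ one_pos
  set Br : ℝ := B.toReal with hBrdef
  have hBr : 0 < Br := ENNReal.toReal_pos hBpos.ne' hBlt.ne
  refine ⟨2 * (2 * Br) ^ (1/p), by positivity, ?_⟩
  intro s hs f g hg0 hg hfg
  set I : ℝ≥0∞ := ∫⁻ x, ENNReal.ofReal (g x ^ p) with hIdef
  refine iSup₂_le fun l hl => ?_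
  by_cases hN0 : N = 0
  · subst hN0
    have hempty : {q : EuclideanSpace ℝ (Fin 0) × EuclideanSpace ℝ (Fin 0) |
        l < Real.log (1 + |f q.1 - f q.2| / dist q.1 q.2 ^ s) *
          dist q.1 q.2 ^ (-((0 : ℕ) / p : ℝ))} = ∅ := by
      ext q
      simp only [Set.mem_setOf_eq, Set.mem_empty_iff_false, iff_false, not_lt]
      have hq : q.1 = q.2 := Subsingleton.elim _ _
      rw [hq]
      simp [Real.zero_rpow hs.1.ne', Real.log_one]
      linarith
    rw [hempty, measure_empty, ENNReal.zero_rpow_of_pos (by positivity), mul_zero]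
    exact zero_le
  have hN : 0 < N := Nat.pos_of_ne_zero hN0
  set c : ℝ := (N : ℝ) / p with hcdef
  -- measurable version of g
  have hgm := hg.aestronglyMeasurable
  set g' : EuclideanSpace ℝ (Fin N) → ℝ := hgm.mk g with hg'def
  have hg'm : Measurable g' := hgm.stronglyMeasurable_mk.measurable
  set G : EuclideanSpace ℝ (Fin N) → ℝ := fun x => max (g' x) 0 with hGdef
  have hGm : Measurable G := hg'm.max measurable_const
  have hG0 : ∀ x, 0 ≤ G x := fun x => le_max_right _ _
  have hGae : g =ᵐ[volume] G := hgm.ae_eq_mk.mono fun x hx => by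
    show g x = max (hgm.mk g x) 0
    rw [← hx, max_eq_left (hg0 x)]
  have hbad : volume {x | ¬ g x = G x} = 0 := hGae
  -- the measurable majorizing set
  set A : Set (EuclideanSpace ℝ (Fin N) × EuclideanSpace ℝ (Fin N)) :=
    {q | l/2 < G q.1 * dist q.1 q.2 ^ (-c)} with hAdef
  have hAm : MeasurableSet A := by
    apply measurableSet_lt measurable_const
    exact (hGm.comp measurable_fst).mul
      ((measurable_fst.dist measurable_snd).pow measurable_const)
  -- integral of G^p equals integral of g^p
  have hIG : (∫⁻ x, ENNReal.ofReal (G x ^ p)) = I := by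
    rw [hIdef]
    exact lintegral_congr_ae (hGae.symm.fun_comp fun t => ENNReal.ofReal (t ^ p))
  -- bound on the measure of A
  have hμA : (volume.prod volume) A ≤ ENNReal.ofReal ((2/l)^p) * I * B := by
    rw [Measure.prod_apply hAm]
    have hpt : ∀ x : EuclideanSpace ℝ (Fin N),
        volume (Prod.mk x ⁻¹' A) ≤ ENNReal.ofReal ((G x / (l/2)) ^ p) * B := fun x => by
      have hpre : Prod.mk x ⁻¹' A = {y | l/2 < G x * dist x y ^ (-c)} := rfl
      rw [hpre]
      exact volB hN hp0 (half_pos hl) (hG0 x) x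
    calc (∫⁻ x, volume (Prod.mk x ⁻¹' A))
        ≤ ∫⁻ x, ENNReal.ofReal ((G x / (l/2)) ^ p) * B := lintegral_mono hpt
      _ = ∫⁻ x, ENNReal.ofReal ((2/l)^p) * ENNReal.ofReal (G x ^ p) * B := by
          apply lintegral_congr fun x => ?_
          congr 1
          rw [← ENNReal.ofReal_mul (by positivity)]
          congr 1
          rw [div_eq_mul_inv (G x), ← Real.mul_rpow (by positivity) (hG0 x)]
          congr 1
          field_simp
      _ = ENNReal.ofReal ((2/l)^p) * I * B := by
          rw [← hIG]
          rw [lintegral_mul_const _ ((((hGm.pow measurable_const)).ennreal_ofReal).const_mul _),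
            lintegral_const_mul _ (((hGm.pow measurable_const)).ennreal_ofReal)]
  -- the swapped set has the same measure
  have hswap : {q : EuclideanSpace ℝ (Fin N) × EuclideanSpace ℝ (Fin N) |
      l/2 < G q.2 * dist q.1 q.2 ^ (-c)} = Prod.swap ⁻¹' A := by
    ext q
    simp only [Set.mem_setOf_eq, Set.mem_preimage, hAdef, Prod.fst_swap, Prod.snd_swap]
    rw [dist_comm]
  have hμA' : (volume.prod volume) {q : EuclideanSpace ℝ (Fin N) × EuclideanSpace ℝ (Fin N) |
      l/2 < G q.2 * dist q.1 q.2 ^ (-c)} = (volume.prod volume) A := by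
    rw [hswap]
    exact (Measure.measurePreserving_swap).measure_preimage hAm.nullMeasurableSet
  -- inclusion of the level set
  have hsubset : {q : EuclideanSpace ℝ (Fin N) × EuclideanSpace ℝ (Fin N) |
        l < Real.log (1 + |f q.1 - f q.2| / dist q.1 q.2 ^ s) *
          dist q.1 q.2 ^ (-((N : ℝ) / p))} ⊆
      (A ∪ {q | l/2 < G q.2 * dist q.1 q.2 ^ (-c)}) ∪
        ({x | ¬ g x = G x} ×ˢ univ ∪ univ ×ˢ {x | ¬ g x = G x}) := by
    intro q hq
    by_cases h1 : g q.1 = G q.1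
    · by_cases h2 : g q.2 = G q.2
      · left
        simp only [Set.mem_setOf_eq] at hq
        have hd : 0 ≤ dist q.1 q.2 ^ (-c) := Real.rpow_nonneg dist_nonneg _
        have hlog := logA hs hg0 hfg q.1 q.2
        have key : l < (g q.1 + g q.2) * dist q.1 q.2 ^ (-c) :=
          lt_of_lt_of_le hq (mul_le_mul_of_nonneg_right hlog hd)
        rw [h1, h2, add_mul] at key
        by_contra hcon
        simp only [Set.mem_union, Set.mem_setOf_eq, hAdef, not_or, not_lt] at hcon
        linarith [hcon.1, hcon.2]
      · right; right; exact ⟨mem_univ _, h2⟩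
    · right; left; exact ⟨h1, mem_univ _⟩
  -- total measure bound
  have hμS : (volume.prod volume) {q : EuclideanSpace ℝ (Fin N) × EuclideanSpace ℝ (Fin N) |
        l < Real.log (1 + |f q.1 - f q.2| / dist q.1 q.2 ^ s) *
          dist q.1 q.2 ^ (-((N : ℝ) / p))} ≤
      2 * (ENNReal.ofReal ((2/l)^p) * I * B) := by
    calc (volume.prod volume) _
        ≤ (volume.prod volume) ((A ∪ {q | l/2 < G q.2 * dist q.1 q.2 ^ (-c)}) ∪
          ({x | ¬ g x = G x} ×ˢ univ ∪ univ ×ˢ {x | ¬ g x = G x})) := measure_mono hsubset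
      _ ≤ ((volume.prod volume) A +
            (volume.prod volume) {q | l/2 < G q.2 * dist q.1 q.2 ^ (-c)}) +
          ((volume.prod volume) ({x | ¬ g x = G x} ×ˢ (univ : Set (EuclideanSpace ℝ (Fin N)))) +
            (volume.prod volume) ((univ : Set (EuclideanSpace ℝ (Fin N))) ×ˢ {x | ¬ g x = G x})) :=
          le_trans (measure_union_le _ _) (add_le_add (measure_union_le _ _) (measure_union_le _ _))
      _ = (volume.prod volume) A + (volume.prod volume) A := by
          rw [hμA', Measure.prod_prod, Measure.prod_prod, hbad, zero_mul, mul_zero,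
            add_zero, add_zero]
      _ ≤ (ENNReal.ofReal ((2/l)^p) * I * B) + (ENNReal.ofReal ((2/l)^p) * I * B) :=
          add_le_add hμA hμA
      _ = 2 * (ENNReal.ofReal ((2/l)^p) * I * B) := (two_mul _).symm
  -- conclude
  have hstep : ENNReal.ofReal l *
      ((volume.prod volume) {q : EuclideanSpace ℝ (Fin N) × EuclideanSpace ℝ (Fin N) |
        l < Real.log (1 + |f q.1 - f q.2| / dist q.1 q.2 ^ s) *
          dist q.1 q.2 ^ (-((N : ℝ) / p))}) ^ (1/p) ≤
      ENNReal.ofReal l * (2 * (ENNReal.ofReal ((2/l)^p) * I * B)) ^ (1/p) := by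
    exact mul_le_mul_right (ENNReal.rpow_le_rpow hμS (by positivity)) _
  refine le_trans hstep ?_
  -- algebra in ℝ≥0∞
  have hB2 : (2 : ℝ≥0∞) * B = ENNReal.ofReal (2 * Br) := by
    rw [ENNReal.ofReal_mul (by norm_num), ENNReal.ofReal_ofNat, hBrdef,
      ENNReal.ofReal_toReal hBlt.ne]
  have h1p : 0 ≤ 1/p := by positivity
  have hexp : (ENNReal.ofReal ((2/l)^p)) ^ (1/p) = ENNReal.ofReal (2/l) := by
    rw [← ENNReal.ofReal_rpow_of_pos (by positivity), ← ENNReal.rpow_mul,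
      mul_one_div_cancel hp0.ne', ENNReal.rpow_one]
  calc ENNReal.ofReal l * (2 * (ENNReal.ofReal ((2/l)^p) * I * B)) ^ (1/p)
      = ENNReal.ofReal l * ((2 * B * ENNReal.ofReal ((2/l)^p)) * I) ^ (1/p) := by
        ring_nf
    _ = ENNReal.ofReal l * ((2*B)^(1/p) * ENNReal.ofReal (2/l) * I^(1/p)) := by
        rw [ENNReal.mul_rpow_of_nonneg _ _ h1p, ENNReal.mul_rpow_of_nonneg _ _ h1p, hexp]
    _ = (ENNReal.ofReal l * ENNReal.ofReal (2/l)) * ((2*B)^(1/p) * I^(1/p)) := by ring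
    _ = ENNReal.ofReal 2 * ((2*B)^(1/p) * I^(1/p)) := by
        rw [← ENNReal.ofReal_mul hl.le, mul_div_cancel₀ _ hl.ne']
    _ = ENNReal.ofReal (2 * (2*Br)^(1/p)) * I^(1/p) := by
        rw [hB2, ENNReal.ofReal_rpow_of_pos (by positivity),
          ENNReal.ofReal_mul (by norm_num : (0:ℝ) ≤ 2)]
        ring
    _ ≤ ENNReal.ofReal (2 * (2*Br)^(1/p)) * I^(1/p) := le_refl _
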